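/- With Y(η) = tanh η, U'(η) = -2 tanh η, Z₁(η) = η U'(η) Y''(η) + 2 U'(η) Y'(η) + 2η Y'''(η) + 6 Y''(η), and Z₂(η) = U'(η) Y''(η) + 2 Y'''(η), the following improper integrals converge and satisfy: ∫_ℝ Z₁(η) U'(η) dη = 8, ∫_ℝ Z₂(η)(η U'(η) + 2) dη = -8, ∫_ℝ Z₂(η) U'(η) dη = 0, and ∫_ℝ Z₁(η)(η U'(η) + 2) dη = 0. -/

import Mathlib

open MeasureTheory Real Filter Topology Set

/- Basic facts about tanh -/
lemma tanh_hasDerivAt (x : ℝ) : HasDerivAt Real.tanh (1 - Real.tanh x ^ 2) x := by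
  have h : HasDerivAt (fun y => Real.sinh y / Real.cosh y)
      ((Real.cosh x * Real.cosh x - Real.sinh x * Real.sinh x) / Real.cosh x ^ 2) x :=
    (Real.hasDerivAt_sinh x).div (Real.hasDerivAt_cosh x) (Real.cosh_pos x).ne'
  have e : Real.tanh = fun y => Real.sinh y / Real.cosh y :=
    funext fun y => Real.tanh_eq_sinh_div_cosh y
  have hc := (Real.cosh_pos x).ne'
  have id1 := Real.cosh_sq_sub_sinh_sq x
  have hval : 1 - Real.tanh x ^ 2
      = (Real.cosh x * Real.cosh x - Real.sinh x * Real.sinh x) / Real.cosh x ^ 2 := by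
    rw [Real.tanh_eq_sinh_div_cosh]
    field_simp
  rw [hval, e]
  exact h

lemma continuous_tanh' : Continuous Real.tanh :=
  Differentiable.continuous (fun x => (tanh_hasDerivAt x).differentiableAt)

lemma s_eq (x : ℝ) : 1 - Real.tanh x ^ 2 = 1 / Real.cosh x ^ 2 := by
  have hc := (Real.cosh_pos x).ne'
  have id1 := Real.cosh_sq_sub_sinh_sq x
  rw [Real.tanh_eq_sinh_div_cosh]
  field_simp
  exact id1

lemma s_nonneg (x : ℝ) : 0 ≤ 1 - Real.tanh x ^ 2 := by
  rw [s_eq]; positivity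

lemma s_le_one (x : ℝ) : 1 - Real.tanh x ^ 2 ≤ 1 := by
  nlinarith [sq_nonneg (Real.tanh x)]

lemma abs_tanh_le (x : ℝ) : |Real.tanh x| ≤ 1 := by
  have := s_nonneg x
  rw [abs_le_one_iff_mul_self_le_one]
  nlinarith

lemma s_le_exp (x : ℝ) : 1 - Real.tanh x ^ 2 ≤ 4 * (Real.exp (-x) * Real.exp (-x)) := by
  have hc : Real.exp x / 2 ≤ Real.cosh x := by
    rw [Real.cosh_eq]; linarith [(Real.exp_pos (-x)).le]
  have hcp := Real.cosh_pos x
  have hep := Real.exp_pos x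
  have hinv : Real.exp (-x) = (Real.exp x)⁻¹ := Real.exp_neg x
  rw [s_eq, hinv, div_le_iff₀ (by positivity)]
  have h1 : Real.exp x * Real.exp x / 4 ≤ Real.cosh x ^ 2 := by nlinarith
  rw [← sub_nonneg]
  have : 4 * ((Real.exp x)⁻¹ * (Real.exp x)⁻¹) * Real.cosh x ^ 2 - 1
      = 4 * ((Real.exp x)⁻¹ * (Real.exp x)⁻¹) * (Real.cosh x ^ 2 - Real.exp x * Real.exp x / 4) := by
    field_simp
  rw [this]
  exact mul_nonneg (by positivity) (by linarith)

/- Master integrable majorant -/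
lemma master_integrable : Integrable (fun x : ℝ => (1 + x ^ 2) * (1 - Real.tanh x ^ 2)) := by
  have hcont : Continuous fun x : ℝ => (1 + x ^ 2) * (1 - Real.tanh x ^ 2) :=
    (continuous_const.add (continuous_pow 2)).mul
      (continuous_const.sub (continuous_tanh'.pow 2))
  apply hcont.locallyIntegrable.integrable_of_isBigO_atTop_of_norm_isNegInvariant
    (g := fun x : ℝ => Real.exp (-1 * x))
  · refine ae_of_all _ fun x => ?_
    simp [Function.comp, Real.tanh_neg]
  · rw [Asymptotics.isBigO_iff]
    refine ⟨4, ?_⟩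
    have h0 : Tendsto (fun x : ℝ => (1 + x ^ 2) * Real.exp (-x)) atTop (𝓝 0) := by
      have h := Real.tendsto_exp_neg_atTop_nhds_zero.add
        (Real.tendsto_pow_mul_exp_neg_atTop_nhds_zero 2)
      have h2 : Tendsto (fun x : ℝ => (1 + x ^ 2) * Real.exp (-x)) atTop (𝓝 (0 + 0)) :=
        h.congr fun x => by ring
      simpa using h2
    filter_upwards [h0.eventually_lt_const one_pos, eventually_ge_atTop (0 : ℝ)] with x h1 _
    have hs0 := s_nonneg x
    have hse := s_le_exp x
    have hep := (Real.exp_pos (-x)).le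
    have hx2 : (0:ℝ) ≤ 1 + x ^ 2 := by positivity
    have hnorm1 : ‖(1 + x ^ 2) * (1 - Real.tanh x ^ 2)‖ = (1 + x ^ 2) * (1 - Real.tanh x ^ 2) :=
      abs_of_nonneg (mul_nonneg hx2 hs0)
    have hnorm2 : ‖Real.exp (-1 * x)‖ = Real.exp (-x) := by
      rw [Real.norm_eq_abs, abs_of_nonneg (Real.exp_pos _).le, neg_one_mul]
    rw [hnorm1, hnorm2]
    nlinarith [mul_le_mul_of_nonneg_left hse hx2, mul_nonneg hx2 hep, Real.exp_pos (-x)]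
  · exact ⟨Ioi 0, Ioi_mem_atTop 0, exp_neg_integrableOn_Ioi 0 one_pos⟩

/- integrability of monomials -/
lemma integrable_monomial (c : ℝ) (k m n : ℕ) (hk : k ≤ 2) (hn : n ≠ 0) :
    Integrable (fun x : ℝ => c * (x ^ k * Real.tanh x ^ m * (1 - Real.tanh x ^ 2) ^ n)) := by
  refine (master_integrable.const_mul |c|).mono' ?_ (ae_of_all _ fun x => ?_)
  · exact (continuous_const.mul (((continuous_pow k).mul (continuous_tanh'.pow m)).mul
      ((continuous_const.sub (continuous_tanh'.pow 2)).pow n))).aestronglyMeasurable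
  · have hs0 := s_nonneg x
    have hs1 := s_le_one x
    have ht := abs_tanh_le x
    have h1 : |Real.tanh x| ^ m ≤ 1 := pow_le_one₀ (abs_nonneg _) ht
    have h2 : (1 - Real.tanh x ^ 2) ^ n ≤ 1 - Real.tanh x ^ 2 := pow_le_of_le_one hs0 hs1 hn
    have h3 : |x| ^ k ≤ 1 + x ^ 2 := by
      interval_cases k
      · simp; nlinarith
      · simp only [pow_one]; nlinarith [sq_abs x, abs_nonneg x]
      · nlinarith [sq_abs x]
    have key : |x ^ k * Real.tanh x ^ m * (1 - Real.tanh x ^ 2) ^ n|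
        ≤ (1 + x ^ 2) * (1 - Real.tanh x ^ 2) := by
      rw [abs_mul, abs_mul, abs_pow, abs_pow, abs_of_nonneg (pow_nonneg hs0 n)]
      calc |x| ^ k * |Real.tanh x| ^ m * (1 - Real.tanh x ^ 2) ^ n
          ≤ (1 + x ^ 2) * 1 * (1 - Real.tanh x ^ 2) := by
            apply mul_le_mul (mul_le_mul h3 h1 (pow_nonneg (abs_nonneg _) m) (by positivity)) h2
              (pow_nonneg hs0 n) (by positivity)
        _ = (1 + x ^ 2) * (1 - Real.tanh x ^ 2) := by ring
    have : ‖c * (x ^ k * Real.tanh x ^ m * (1 - Real.tanh x ^ 2) ^ n)‖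
        = |c| * |x ^ k * Real.tanh x ^ m * (1 - Real.tanh x ^ 2) ^ n| := abs_mul _ _
    rw [this]
    exact mul_le_mul_of_nonneg_left key (abs_nonneg c)

/- limits -/
lemma tendsto_tanh_atTop : Tendsto Real.tanh atTop (𝓝 1) := by
  have hup : ∀ᶠ x : ℝ in atTop, Real.tanh x ≤ 1 :=
    Eventually.of_forall fun x => le_of_abs_le (abs_tanh_le x)
  have hlow : ∀ᶠ x : ℝ in atTop, 1 - 4 * (Real.exp (-x) * Real.exp (-x)) ≤ Real.tanh x := by
    filter_upwards [eventually_ge_atTop (0 : ℝ)] with x hx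
    have ht0 : 0 ≤ Real.tanh x := by
      rw [Real.tanh_eq_sinh_div_cosh]
      exact div_nonneg (Real.sinh_nonneg_iff.2 hx) (Real.cosh_pos x).le
    have ht1 : Real.tanh x ≤ 1 := le_of_abs_le (abs_tanh_le x)
    have hse := s_le_exp x
    nlinarith
  have hl : Tendsto (fun x : ℝ => 1 - 4 * (Real.exp (-x) * Real.exp (-x))) atTop (𝓝 1) := by
    have h := ((Real.tendsto_exp_neg_atTop_nhds_zero.mul
      Real.tendsto_exp_neg_atTop_nhds_zero).const_mul 4).const_sub 1
    simpa using h
  exact tendsto_of_tendsto_of_tendsto_of_le_of_le' hl tendsto_const_nhds hlow hup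

lemma tendsto_s_atTop : Tendsto (fun x : ℝ => 1 - Real.tanh x ^ 2) atTop (𝓝 0) := by
  have h := (tendsto_tanh_atTop.pow 2).const_sub 1
  simpa using h

lemma tendsto_xs_atTop : Tendsto (fun x : ℝ => x * (1 - Real.tanh x ^ 2)) atTop (𝓝 0) := by
  have hup : Tendsto (fun x : ℝ => 4 * (x ^ 1 * Real.exp (-x) * Real.exp (-x))) atTop (𝓝 0) := by
    have h := ((Real.tendsto_pow_mul_exp_neg_atTop_nhds_zero 1).mul
      Real.tendsto_exp_neg_atTop_nhds_zero).const_mul 4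
    simpa using h
  refine tendsto_of_tendsto_of_tendsto_of_le_of_le' tendsto_const_nhds hup ?_ ?_
  · filter_upwards [eventually_ge_atTop (0 : ℝ)] with x hx
    exact mul_nonneg hx (s_nonneg x)
  · filter_upwards [eventually_ge_atTop (0 : ℝ)] with x hx
    have hse := s_le_exp x
    have h := mul_le_mul_of_nonneg_left hse hx
    calc x * (1 - Real.tanh x ^ 2) ≤ x * (4 * (Real.exp (-x) * Real.exp (-x))) := h
      _ = 4 * (x ^ 1 * Real.exp (-x) * Real.exp (-x)) := by ring

lemma tendsto_atBot_of_odd {F : ℝ → ℝ} {a : ℝ} (hodd : ∀ x, F (-x) = -F x)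
    (h : Tendsto F atTop (𝓝 a)) : Tendsto F atBot (𝓝 (-a)) := by
  have h2 := (h.comp tendsto_neg_atBot_atTop).neg
  have h3 : ∀ x : ℝ, -(F ∘ fun x : ℝ => -x) x = F x := fun x => by
    simp [Function.comp, hodd]
  exact h2.congr h3

lemma integral_odd {f : ℝ → ℝ} (h : ∀ x, f (-x) = -f x) : ∫ x : ℝ, f x = 0 := by
  have h1 : ∫ x : ℝ, f (-x) = ∫ x : ℝ, f x := integral_neg_eq_self f volume
  have h2 : ∫ x : ℝ, f (-x) = -∫ x : ℝ, f x := by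
    rw [show (fun x : ℝ => f (-x)) = fun x : ℝ => -f x from funext h, integral_neg]
  linarith

/- The four explicit integrands -/
noncomputable def g1 (x : ℝ) : ℝ :=
  (-24) * (x ^ 1 * Real.tanh x ^ 3 * (1 - Real.tanh x ^ 2) ^ 1)
  + 8 * (x ^ 1 * Real.tanh x ^ 1 * (1 - Real.tanh x ^ 2) ^ 2)
  + 32 * (x ^ 0 * Real.tanh x ^ 2 * (1 - Real.tanh x ^ 2) ^ 1)

noncomputable def g2 (x : ℝ) : ℝ :=
  (-24) * (x ^ 1 * Real.tanh x ^ 3 * (1 - Real.tanh x ^ 2) ^ 1)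
  + 8 * (x ^ 1 * Real.tanh x ^ 1 * (1 - Real.tanh x ^ 2) ^ 2)
  + 24 * (x ^ 0 * Real.tanh x ^ 2 * (1 - Real.tanh x ^ 2) ^ 1)
  + (-8) * (x ^ 0 * Real.tanh x ^ 0 * (1 - Real.tanh x ^ 2) ^ 2)

noncomputable def g3 (x : ℝ) : ℝ :=
  (-24) * (x ^ 0 * Real.tanh x ^ 3 * (1 - Real.tanh x ^ 2) ^ 1)
  + 8 * (x ^ 0 * Real.tanh x ^ 1 * (1 - Real.tanh x ^ 2) ^ 2)

noncomputable def g4 (x : ℝ) : ℝ :=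
  (-24) * (x ^ 2 * Real.tanh x ^ 3 * (1 - Real.tanh x ^ 2) ^ 1)
  + 8 * (x ^ 2 * Real.tanh x ^ 1 * (1 - Real.tanh x ^ 2) ^ 2)
  + 56 * (x ^ 1 * Real.tanh x ^ 2 * (1 - Real.tanh x ^ 2) ^ 1)
  + (-8) * (x ^ 1 * Real.tanh x ^ 0 * (1 - Real.tanh x ^ 2) ^ 2)
  + (-32) * (x ^ 0 * Real.tanh x ^ 1 * (1 - Real.tanh x ^ 2) ^ 1)

lemma integrable_g1 : Integrable g1 := by
  have h := ((integrable_monomial (-24) 1 3 1 (by norm_num) one_ne_zero).add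
    (integrable_monomial 8 1 1 2 (by norm_num) two_ne_zero)).add
    (integrable_monomial 32 0 2 1 (by norm_num) one_ne_zero)
  exact h.congr (ae_of_all _ fun x => by simp [g1])

lemma integrable_g2 : Integrable g2 := by
  have h := (((integrable_monomial (-24) 1 3 1 (by norm_num) one_ne_zero).add
    (integrable_monomial 8 1 1 2 (by norm_num) two_ne_zero)).add
    (integrable_monomial 24 0 2 1 (by norm_num) one_ne_zero)).add
    (integrable_monomial (-8) 0 0 2 (by norm_num) two_ne_zero)
  exact h.congr (ae_of_all _ fun x => by simp [g2])

lemma integrable_g3 : Integrable g3 := by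
  have h := (integrable_monomial (-24) 0 3 1 (by norm_num) one_ne_zero).add
    (integrable_monomial 8 0 1 2 (by norm_num) two_ne_zero)
  exact h.congr (ae_of_all _ fun x => by simp [g3])

lemma integrable_g4 : Integrable g4 := by
  have h := ((((integrable_monomial (-24) 2 3 1 (by norm_num) one_ne_zero).add
    (integrable_monomial 8 2 1 2 (by norm_num) two_ne_zero)).add
    (integrable_monomial 56 1 2 1 (by norm_num) one_ne_zero)).add
    (integrable_monomial (-8) 1 0 2 (by norm_num) two_ne_zero)).add
    (integrable_monomial (-32) 0 1 1 (by norm_num) one_ne_zero)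
  exact h.congr (ae_of_all _ fun x => by simp [g4])

/- limits of the antiderivatives -/
lemma tendsto_A : Tendsto (fun x : ℝ => x * (Real.tanh x ^ 4 - 1)) atTop (𝓝 0) := by
  have h := (tendsto_xs_atTop.mul ((tendsto_tanh_atTop.pow 2).const_add 1)).neg
  have h2 : Tendsto (fun x : ℝ => x * (Real.tanh x ^ 4 - 1)) atTop
      (𝓝 (-(0 * (1 + 1 ^ 2)))) := h.congr fun x => by ring
  simpa using h2

lemma tendsto_B : Tendsto (fun x : ℝ => x * (1 - Real.tanh x ^ 2) ^ 2) atTop (𝓝 0) := by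
  have h := tendsto_xs_atTop.mul tendsto_s_atTop
  have h2 : Tendsto (fun x : ℝ => x * (1 - Real.tanh x ^ 2) ^ 2) atTop
      (𝓝 (0 * 0)) := h.congr fun x => by ring
  simpa using h2

lemma integral_g1 : ∫ x : ℝ, g1 x = 8 := by
  have htop : Tendsto (fun x : ℝ => (-6) * (x * (Real.tanh x ^ 4 - 1))
      + (-2) * (x * (1 - Real.tanh x ^ 2) ^ 2) + (-4) * Real.tanh x + 8 * Real.tanh x ^ 3)
      atTop (𝓝 4) := by
    have h := (((tendsto_A.const_mul (-6)).add (tendsto_B.const_mul (-2))).add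
      (tendsto_tanh_atTop.const_mul (-4))).add ((tendsto_tanh_atTop.pow 3).const_mul 8)
    convert h using 2
    norm_num
  have hbot : Tendsto (fun x : ℝ => (-6) * (x * (Real.tanh x ^ 4 - 1))
      + (-2) * (x * (1 - Real.tanh x ^ 2) ^ 2) + (-4) * Real.tanh x + 8 * Real.tanh x ^ 3)
      atBot (𝓝 (-4)) :=
    tendsto_atBot_of_odd (fun x => by simp only [Real.tanh_neg]; ring) htop
  have hder : ∀ x : ℝ, HasDerivAt (fun x : ℝ => (-6) * (x * (Real.tanh x ^ 4 - 1))
      + (-2) * (x * (1 - Real.tanh x ^ 2) ^ 2) + (-4) * Real.tanh x + 8 * Real.tanh x ^ 3)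
      (g1 x) x := by
    intro x
    have T := tanh_hasDerivAt x
    have h := ((((hasDerivAt_id x).mul ((T.pow 4).sub_const 1)).const_mul (-6)).add
      (((hasDerivAt_id x).mul (((T.pow 2).const_sub 1).pow 2)).const_mul (-2))).add
      (T.const_mul (-4)) |>.add ((T.pow 3).const_mul 8)
    refine h.congr_deriv ?_
    simp only [g1]
    push_cast
    simp only [id_eq, Pi.pow_apply]
    ring
  rw [MeasureTheory.integral_of_hasDerivAt_of_tendsto hder integrable_g1 hbot htop]
  norm_num

lemma integral_g2 : ∫ x : ℝ, g2 x = -8 := by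
  have htop : Tendsto (fun x : ℝ => (-6) * (x * (Real.tanh x ^ 4 - 1))
      + (-2) * (x * (1 - Real.tanh x ^ 2) ^ 2) + (-12) * Real.tanh x + 8 * Real.tanh x ^ 3)
      atTop (𝓝 (-4)) := by
    have h := (((tendsto_A.const_mul (-6)).add (tendsto_B.const_mul (-2))).add
      (tendsto_tanh_atTop.const_mul (-12))).add ((tendsto_tanh_atTop.pow 3).const_mul 8)
    convert h using 2
    norm_num
  have hbot : Tendsto (fun x : ℝ => (-6) * (x * (Real.tanh x ^ 4 - 1))
      + (-2) * (x * (1 - Real.tanh x ^ 2) ^ 2) + (-12) * Real.tanh x + 8 * Real.tanh x ^ 3)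
      atBot (𝓝 (-(-4))) :=
    tendsto_atBot_of_odd (fun x => by simp only [Real.tanh_neg]; ring) htop
  have hder : ∀ x : ℝ, HasDerivAt (fun x : ℝ => (-6) * (x * (Real.tanh x ^ 4 - 1))
      + (-2) * (x * (1 - Real.tanh x ^ 2) ^ 2) + (-12) * Real.tanh x + 8 * Real.tanh x ^ 3)
      (g2 x) x := by
    intro x
    have T := tanh_hasDerivAt x
    have h := ((((hasDerivAt_id x).mul ((T.pow 4).sub_const 1)).const_mul (-6)).add
      (((hasDerivAt_id x).mul (((T.pow 2).const_sub 1).pow 2)).const_mul (-2))).add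
      (T.const_mul (-12)) |>.add ((T.pow 3).const_mul 8)
    refine h.congr_deriv ?_
    simp only [g2]
    push_cast
    simp only [id_eq, Pi.pow_apply]
    ring
  rw [MeasureTheory.integral_of_hasDerivAt_of_tendsto hder integrable_g2 hbot htop]
  norm_num

lemma integral_g3 : ∫ x : ℝ, g3 x = 0 :=
  integral_odd fun x => by simp only [g3, Real.tanh_neg]; ring

lemma integral_g4 : ∫ x : ℝ, g4 x = 0 :=
  integral_odd fun x => by simp only [g4, Real.tanh_neg]; ring

/-- With `Y = tanh`, `U'(η) = -2 tanh η`,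
`Z₁ = η U' Y'' + 2 U' Y' + 2η Y''' + 6 Y''` and `Z₂ = U' Y'' + 2 Y'''`, the integrals
`∫ Z₁ U' = 8`, `∫ Z₂ (η U' + 2) = -8`, `∫ Z₂ U' = 0`, `∫ Z₁ (η U' + 2) = 0`,
all integrals being convergent. -/
theorem liouville_modulation_projections (U' Y Z₁ Z₂ : ℝ → ℝ)
    (hU' : ∀ η, U' η = -2 * Real.tanh η)
    (hY : ∀ η, Y η = Real.tanh η)
    (hZ₁ : ∀ η, Z₁ η = η * U' η * deriv (deriv Y) η + 2 * U' η * deriv Y η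
      + 2 * η * deriv (deriv (deriv Y)) η + 6 * deriv (deriv Y) η)
    (hZ₂ : ∀ η, Z₂ η = U' η * deriv (deriv Y) η + 2 * deriv (deriv (deriv Y)) η) :
    Integrable (fun η => Z₁ η * U' η) ∧
    Integrable (fun η => Z₂ η * (η * U' η + 2)) ∧
    Integrable (fun η => Z₂ η * U' η) ∧
    Integrable (fun η => Z₁ η * (η * U' η + 2)) ∧
    (∫ η : ℝ, Z₁ η * U' η) = 8 ∧
    (∫ η : ℝ, Z₂ η * (η * U' η + 2)) = -8 ∧
    (∫ η : ℝ, Z₂ η * U' η) = 0 ∧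
    (∫ η : ℝ, Z₁ η * (η * U' η + 2)) = 0 := by
  have hYt : Y = Real.tanh := funext hY
  have hd1 : deriv Y = fun x => 1 - Real.tanh x ^ 2 := by
    funext x; rw [hYt]; exact (tanh_hasDerivAt x).deriv
  have hD2 : ∀ x : ℝ, HasDerivAt (fun y => 1 - Real.tanh y ^ 2)
      (-(2 * Real.tanh x * (1 - Real.tanh x ^ 2))) x := by
    intro x
    have h := ((tanh_hasDerivAt x).pow 2).const_sub 1
    refine h.congr_deriv ?_
    push_cast
    ring
  have hd2 : deriv (deriv Y) = fun x => -(2 * Real.tanh x * (1 - Real.tanh x ^ 2)) := by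
    rw [hd1]; funext x; exact (hD2 x).deriv
  have hD3 : ∀ x : ℝ, HasDerivAt (fun y => -(2 * Real.tanh y * (1 - Real.tanh y ^ 2)))
      (-2 * (1 - Real.tanh x ^ 2) ^ 2 + 4 * Real.tanh x ^ 2 * (1 - Real.tanh x ^ 2)) x := by
    intro x
    have h := (((tanh_hasDerivAt x).const_mul 2).mul (hD2 x)).neg
    refine h.congr_deriv ?_
    ring
  have hd3 : deriv (deriv (deriv Y))
      = fun x => -2 * (1 - Real.tanh x ^ 2) ^ 2 + 4 * Real.tanh x ^ 2 * (1 - Real.tanh x ^ 2) := by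
    rw [hd2]; funext x; exact (hD3 x).deriv
  have e₁ : (fun η => Z₁ η * U' η) = g1 := by
    funext x
    rw [hZ₁, hU', hd3, hd2, hd1]
    simp only [g1]
    ring
  have e₂ : (fun η => Z₂ η * (η * U' η + 2)) = g2 := by
    funext x
    rw [hZ₂, hU', hd3, hd2]
    simp only [g2]
    ring
  have e₃ : (fun η => Z₂ η * U' η) = g3 := by
    funext x
    rw [hZ₂, hU', hd3, hd2]
    simp only [g3]
    ring
  have e₄ : (fun η => Z₁ η * (η * U' η + 2)) = g4 := by
    funext x
    rw [hZ₁, hU', hd3, hd2, hd1]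
    simp only [g4]
    ring
  refine ⟨?_, ?_, ?_, ?_, ?_, ?_, ?_, ?_⟩
  · rw [e₁]; exact integrable_g1
  · rw [e₂]; exact integrable_g2
  · rw [e₃]; exact integrable_g3
  · rw [e₄]; exact integrable_g4
  · rw [e₁]; exact integral_g1
  · rw [e₂]; exact integral_g2
  · rw [e₃]; exact integral_g3
  · rw [e₄]; exact integral_g4
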